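/- Let (F, φ) be a difference field with constant field C, and let R be a Picard-Vessiot ring over F for a difference module. Then there is an R-linear isomorphism of difference rings R ⊗_F R ≅ R ⊗_C C_{R⊗_F R}, where the left side carries the difference structure φ⊗φ and the right side φ⊗id, and C_{R⊗_F R} denotes the ring of φ⊗φ-invariant elements of R ⊗_F R. -/

import Mathlib

open scoped TensorProduct

/-- A Picard–Vessiot ring for the difference module with representing matrix `D ∈ GL_n(F)` over
the difference field `(F, φF)`:  `R` is a simple difference ring extension of `F` (via `φR`
extending `φF`), with the same constants as `F`, containing a fundamental solution matrix
`Y ∈ GL_n(R)` with `D·φ(Y) = Y`, and generated over `F` by the entries of `Y` together with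
`det(Y)⁻¹`. -/
structure IsPVRing (F : Type*) [Field F] (φF : F →+* F)
    (R : Type*) [CommRing R] [Algebra F R] (φR : R →+* R) {n : ℕ}
    (D : Matrix (Fin n) (Fin n) F) (Y : Matrix (Fin n) (Fin n) R) : Prop where
  compat : ∀ f : F, φR (algebraMap F R f) = algebraMap F R (φF f)
  simple : ∀ I : Ideal R, (∀ x ∈ I, φR x ∈ I) → I = ⊥ ∨ I = ⊤
  constants : ∀ x : R, φR x = x → ∃ c : F, φF c = c ∧ algebraMap F R c = x
  Dunit : IsUnit D.det
  fund : D.map (algebraMap F R) * Y.map φR = Y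
  Yunit : IsUnit Y.det
  gen : Algebra.adjoin F
    ((Set.range fun ij : Fin n × Fin n => Y ij.1 ij.2) ∪ {x | x * Y.det = 1}) = ⊤

set_option maxHeartbeats 2000000 in
/-- Let `(F, φ)` be a difference field with constant field `C` and `R` a
Picard–Vessiot ring over `F`.  Then there is an `R`-linear isomorphism of difference rings
`R ⊗_F R ≅ R ⊗_C C_{R⊗_F R}`, where the left side carries the difference structure `φ⊗φ`
(the ring endomorphism `ψ`), the right side `φ⊗id` (the ring endomorphism `ψ'`), and
`C_{R⊗_F R}` (here `E`) is the ring of `φ⊗φ`-invariants of `R ⊗_F R`. -/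
theorem stmt4 (F : Type*) [Field F] (φF : F →+* F)
    (C : Type*) [Field C] [Algebra C F]
    (hC : ∀ x : F, φF x = x ↔ x ∈ (algebraMap C F).range)
    (R : Type*) [CommRing R] [Algebra F R] [Algebra C R] [IsScalarTower C F R]
    (φR : R →+* R) {n : ℕ} (D : Matrix (Fin n) (Fin n) F) (Y : Matrix (Fin n) (Fin n) R)
    (hPV : IsPVRing F φF R φR D Y)
    -- the difference structure `φ ⊗ φ` on `R ⊗_F R`
    (ψ : R ⊗[F] R →+* R ⊗[F] R)
    (hψ : ∀ a b : R, ψ (a ⊗ₜ[F] b) = φR a ⊗ₜ[F] φR b)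
    -- `E` is the ring of constants of `(R ⊗_F R, φ⊗φ)`, a `C`-algebra
    (E : Type*) [CommRing E] [Algebra C E]
    (ιE : E →+* R ⊗[F] R) (hinjE : Function.Injective ιE)
    (hErange : ∀ x : R ⊗[F] R, ψ x = x ↔ x ∈ ιE.range)
    (hEalg : ∀ c : C, ιE (algebraMap C E c) = algebraMap F (R ⊗[F] R) (algebraMap C F c)) :
    ∃ (e : (R ⊗[F] R) ≃+* (R ⊗[C] E)) (ψ' : R ⊗[C] E →+* R ⊗[C] E),
      -- `ψ'` is the difference structure `φ ⊗ id` on `R ⊗_C E`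
      (∀ (a : R) (x : E), ψ' (a ⊗ₜ[C] x) = φR a ⊗ₜ[C] x) ∧
      -- `e` is `R`-linear (for the left `R`-structures)
      (∀ (r : R) (x : R ⊗[F] R), e ((r ⊗ₜ[F] (1 : R)) * x) = (r ⊗ₜ[C] (1 : E)) * e x) ∧
      -- `e` is an isomorphism of difference rings
      (∀ x, e (ψ x) = ψ' (e x)) := by
  classical
  haveI : SMulCommClass F C R := ⟨fun a b c => by
    simp only [Algebra.smul_def]; ring⟩
  -- basic facts
  have hψfix : ∀ x : E, ψ (ιE x) = ιE x := fun x => (hErange _).mpr ⟨x, rfl⟩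
  have hφC : ∀ c : C, φR (algebraMap C R c) = algebraMap C R c := by
    intro c
    rw [IsScalarTower.algebraMap_apply C F R, hPV.compat, (hC _).mpr ⟨c, rfl⟩]
  have hιalg : ∀ c : C, ιE (algebraMap C E c) = algebraMap C (R ⊗[F] R) c := by
    intro c
    rw [hEalg, Algebra.TensorProduct.algebraMap_apply,
      Algebra.TensorProduct.algebraMap_apply, ← IsScalarTower.algebraMap_apply]
  -- the multiplication map μ : R ⊗[C] E →ₐ[C] R ⊗[F] R
  let gE : E →ₐ[C] R ⊗[F] R :=
    { toRingHom := ιE, commutes' := hιalg }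
  let μ : R ⊗[C] E →ₐ[C] R ⊗[F] R :=
    Algebra.TensorProduct.lift (Algebra.TensorProduct.includeLeft (S := C)) gE
      (fun x y => mul_comm _ _)
  have hμtmul : ∀ (a : R) (x : E), μ (a ⊗ₜ[C] x) = (a ⊗ₜ[F] (1 : R)) * ιE x := by
    intro a x
    rw [show μ (a ⊗ₜ[C] x) = Algebra.TensorProduct.includeLeft (S := C) a * gE x from
      Algebra.TensorProduct.lift_tmul _ _ _ _ _]
    rfl
  set lm : R →+* R ⊗[F] R := (Algebra.TensorProduct.includeLeft (S := F) (A := R) (B := R)).toRingHom with hlm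
  set rm : R →+* R ⊗[F] R := (Algebra.TensorProduct.includeRight (R := F) (A := R) (B := R)).toRingHom with hrm
  have hlma : ∀ a : R, lm a = a ⊗ₜ[F] (1 : R) := fun a => rfl
  have hrma : ∀ a : R, rm a = (1 : R) ⊗ₜ[F] a := fun a => rfl
  have step : ∀ (m : R →+* R ⊗[F] R),
      (∀ f : F, m (algebraMap F R f) = algebraMap F (R ⊗[F] R) f) →
      (∀ a : R, ψ (m a) = m (φR a)) →
      D.map ⇑(algebraMap F (R ⊗[F] R)) * (Y.map ⇑m).map ⇑ψ = Y.map ⇑m := by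
    intro m hm1 hm2
    have h1 : (Y.map ⇑m).map ⇑ψ = (Y.map ⇑φR).map ⇑m := by
      rw [Matrix.map_map, Matrix.map_map]
      exact congrArg Y.map (funext fun a => hm2 a)
    have h2 : D.map ⇑(algebraMap F (R ⊗[F] R)) = (D.map ⇑(algebraMap F R)).map ⇑m := by
      rw [Matrix.map_map]
      exact congrArg D.map (funext fun f => (hm1 f).symm)
    rw [h1, h2, ← Matrix.map_mul, hPV.fund]
  have hstepL : D.map ⇑(algebraMap F (R ⊗[F] R)) * ((Y.map ⇑lm).map ⇑ψ) = Y.map ⇑lm := by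
    refine step lm (fun f => ?_) (fun a => ?_)
    · exact (Algebra.TensorProduct.includeLeft (S := F) (A := R) (B := R)).commutes f
    · rw [hlma, hlma, hψ, map_one]
  have hstepR : D.map ⇑(algebraMap F (R ⊗[F] R)) * ((Y.map ⇑rm).map ⇑ψ) = Y.map ⇑rm := by
    refine step rm (fun f => ?_) (fun a => ?_)
    · exact (Algebra.TensorProduct.includeRight (R := F) (A := R) (B := R)).commutes f
    · rw [hrma, hrma, hψ, map_one]
  set Yl := Y.map ⇑lm with hYldef
  set Yr := Y.map ⇑rm with hYrdef
  have hdetYl : Yl.det = Y.det ⊗ₜ[F] (1 : R) := by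
    rw [hYldef, ← RingHom.mapMatrix_apply, ← RingHom.map_det, hlma]
  have hdetYr : Yr.det = (1 : R) ⊗ₜ[F] Y.det := by
    rw [hYrdef, ← RingHom.mapMatrix_apply, ← RingHom.map_det, hrma]
  have hYlu : IsUnit Yl.det := by rw [hdetYl, ← hlma]; exact hPV.Yunit.map lm
  set Z := Yl⁻¹ * Yr with hZdef
  have hYlZ : Yl * Z = Yr := by
    rw [hZdef, ← mul_assoc, Matrix.mul_nonsing_inv _ hYlu, one_mul]
  have hZfix : Z.map ⇑ψ = Z := by
    have h1 : Yl * Z.map ⇑ψ = Yr := by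
      calc Yl * Z.map ⇑ψ
          = D.map ⇑(algebraMap F (R ⊗[F] R)) * (Yl.map ⇑ψ * Z.map ⇑ψ) := by
            rw [← mul_assoc, hstepL]
        _ = D.map ⇑(algebraMap F (R ⊗[F] R)) * ((Yl * Z).map ⇑ψ) := by
            rw [← Matrix.map_mul]
        _ = Yr := by rw [hYlZ, hstepR]
    calc Z.map ⇑ψ = Yl⁻¹ * Yl * Z.map ⇑ψ := by rw [Matrix.nonsing_inv_mul _ hYlu, one_mul]
      _ = Yl⁻¹ * (Yl * Z.map ⇑ψ) := by rw [mul_assoc]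
      _ = Z := by rw [h1]
  have hZψ : ∀ i j, ψ (Z i j) = Z i j := by
    intro i j
    have := congrFun (congrFun hZfix i) j
    simpa [Matrix.map_apply] using this
  have hZdetfix : ψ Z.det = Z.det := by
    rw [RingHom.map_det, RingHom.mapMatrix_apply, hZfix]
  have hdetmul : Yl.det * Z.det = Yr.det := by rw [← Matrix.det_mul, hYlZ]
  set β := Module.Basis.ofVectorSpace C E with hβ
  set ιt := ↥(Module.Basis.ofVectorSpaceIndex C E) with hιt
  have key : ∀ (N : ℕ) (s : Finset ιt), s.card ≤ N → ∀ g : ιt → R,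
      (∑ i ∈ s, ((g i) ⊗ₜ[F] (1 : R)) * ιE (β i)) = 0 → ∀ j ∈ s, g j = 0 := by
    intro N
    induction N with
    | zero =>
      intro s hs g hrel j hj
      rw [Nat.le_zero, Finset.card_eq_zero] at hs
      subst hs
      exact absurd hj (Finset.notMem_empty j)
    | succ N IH =>
      intro s hcard g hrel j hj
      by_contra hgj
      -- the ideal of leading coefficients
      let I : Ideal R :=
        { carrier := {b | ∃ h : ιt → R,
            (b ⊗ₜ[F] (1 : R)) * ιE (β j)
              + ∑ i ∈ s.erase j, ((h i) ⊗ₜ[F] (1 : R)) * ιE (β i) = 0}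
          zero_mem' := ⟨0, by simp⟩
          add_mem' := by
            rintro a b ⟨ha, hha⟩ ⟨hb, hhb⟩
            refine ⟨fun i => ha i + hb i, ?_⟩
            have expand : ((a + b) ⊗ₜ[F] (1 : R)) * ιE (β j)
                + ∑ i ∈ s.erase j, ((ha i + hb i) ⊗ₜ[F] (1 : R)) * ιE (β i)
                = ((a ⊗ₜ[F] (1 : R)) * ιE (β j)
                    + ∑ i ∈ s.erase j, ((ha i) ⊗ₜ[F] (1 : R)) * ιE (β i))
                + ((b ⊗ₜ[F] (1 : R)) * ιE (β j)
                    + ∑ i ∈ s.erase j, ((hb i) ⊗ₜ[F] (1 : R)) * ιE (β i)) := by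
              simp only [TensorProduct.add_tmul, add_mul, Finset.sum_add_distrib]
              ring
            rw [expand, hha, hhb, add_zero]
          smul_mem' := by
            rintro c x ⟨h, hh⟩
            refine ⟨fun i => c * h i, ?_⟩
            have expand : ((c • x) ⊗ₜ[F] (1 : R)) * ιE (β j)
                + ∑ i ∈ s.erase j, ((c * h i) ⊗ₜ[F] (1 : R)) * ιE (β i)
                = (c ⊗ₜ[F] (1 : R)) * ((x ⊗ₜ[F] (1 : R)) * ιE (β j)
                    + ∑ i ∈ s.erase j, ((h i) ⊗ₜ[F] (1 : R)) * ιE (β i)) := by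
              simp only [smul_eq_mul, mul_add, Finset.mul_sum, ← mul_assoc,
                Algebra.TensorProduct.tmul_mul_tmul, mul_one]
            rw [expand, hh, mul_zero] }
      have hIstab : ∀ x ∈ I, φR x ∈ I := by
        rintro b ⟨h, hh⟩
        refine ⟨fun i => φR (h i), ?_⟩
        have h0 := congrArg ψ hh
        rw [map_zero, map_add, map_mul, map_sum] at h0
        simp only [map_mul, hψ, map_one, hψfix] at h0
        exact h0
      have hgjI : g j ∈ I := ⟨g, by
        rw [Finset.add_sum_erase s (fun i => ((g i) ⊗ₜ[F] (1 : R)) * ιE (β i)) hj]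
        exact hrel⟩
      rcases hPV.simple I hIstab with hbot | htop
      · rw [hbot] at hgjI; exact hgj hgjI
      · have h1I : (1 : R) ∈ I := htop ▸ Submodule.mem_top
        obtain ⟨h, hh1⟩ := h1I
        -- apply ψ
        have hh2 : ((1 : R) ⊗ₜ[F] (1 : R)) * ιE (β j)
            + ∑ i ∈ s.erase j, ((φR (h i)) ⊗ₜ[F] (1 : R)) * ιE (β i) = 0 := by
          have h0 := congrArg ψ hh1
          rw [map_zero, map_add, map_mul, map_sum] at h0
          simp only [map_mul, hψ, map_one, hψfix] at h0
          exact h0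
        -- difference is a shorter relation
        have hh3 : ∑ i ∈ s.erase j, ((h i - φR (h i)) ⊗ₜ[F] (1 : R)) * ιE (β i) = 0 := by
          simp only [TensorProduct.sub_tmul, sub_mul, Finset.sum_sub_distrib]
          linear_combination hh1 - hh2
        have hfix : ∀ i ∈ s.erase j, φR (h i) = h i := by
          intro i hi
          have hcarde : (s.erase j).card ≤ N := by
            have := Finset.card_erase_of_mem hj
            omega
          have := IH (s.erase j) hcarde _ hh3 i hi
          exact (sub_eq_zero.mp this).symm
        have hconst' : ∀ i : ιt, ∃ d : C, (i ∈ s.erase j → h i = algebraMap C R d) := by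
          intro i
          by_cases hi : i ∈ s.erase j
          · obtain ⟨c, hc1, hc2⟩ := hPV.constants _ (hfix i hi)
            obtain ⟨d, hd⟩ := (hC c).mp hc1
            exact ⟨d, fun _ => by rw [← hc2, ← hd, ← IsScalarTower.algebraMap_apply]⟩
          · exact ⟨0, fun h' => absurd h' hi⟩
        choose d hd using hconst'
        -- relation in E
        have heq : ∀ i ∈ s.erase j, ((h i) ⊗ₜ[F] (1 : R)) = ιE (algebraMap C E (d i)) := by
          intro i hi
          rw [hd i hi, hEalg, Algebra.TensorProduct.algebraMap_apply,
            ← IsScalarTower.algebraMap_apply]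
        have hrelE : β j + ∑ i ∈ s.erase j, (d i) • (β i : E) = 0 := by
          apply hinjE
          rw [map_zero, map_add, map_sum]
          have hterm : ∀ i ∈ s.erase j, ιE ((d i) • (β i : E))
              = ((h i) ⊗ₜ[F] (1 : R)) * ιE (β i) := by
            intro i hi
            rw [Algebra.smul_def, map_mul, heq i hi]
          rw [Finset.sum_congr rfl hterm]
          have hone : ((1 : R) ⊗ₜ[F] (1 : R)) = (1 : R ⊗[F] R) :=
            (Algebra.TensorProduct.one_def).symm
          rw [hone, one_mul] at hh1
          exact hh1
        have hcontra := congrArg (fun z : E => (β.repr z) j) hrelE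
        simp only [map_add, map_sum, map_smul, map_zero, Finsupp.coe_add, Finsupp.coe_smul,
          Finsupp.coe_zero, Pi.add_apply, Pi.zero_apply, Finset.sum_apply',
          Pi.smul_apply, Module.Basis.repr_self, smul_eq_mul] at hcontra
        rw [Finsupp.single_eq_same] at hcontra
        have hzero : ∀ i ∈ s.erase j, d i * (Finsupp.single i (1:C)) j = 0 := by
          intro i hi
          rw [Finsupp.single_apply, if_neg (Finset.ne_of_mem_erase hi), mul_zero]
        rw [Finset.sum_congr rfl hzero, Finset.sum_const_zero, add_zero] at hcontra
        exact one_ne_zero hcontra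

  -- surjectivity of μ
  let A : Subalgebra C (R ⊗[F] R) := μ.range
  have hA1 : ∀ a : R, a ⊗ₜ[F] (1 : R) ∈ A := fun a =>
    ⟨a ⊗ₜ[C] (1 : E), by
      show μ (a ⊗ₜ[C] (1 : E)) = a ⊗ₜ[F] (1 : R)
      rw [hμtmul, map_one, mul_one]⟩
  have hA2 : ∀ x : E, ιE x ∈ A := fun x =>
    ⟨(1 : R) ⊗ₜ[C] x, by
      show μ ((1 : R) ⊗ₜ[C] x) = ιE x
      rw [hμtmul, ← Algebra.TensorProduct.one_def, one_mul]⟩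
  have hAY : ∀ i j, (1 : R) ⊗ₜ[F] (Y i j) ∈ A := by
    intro i j
    have h1 : (1 : R) ⊗ₜ[F] (Y i j) = ∑ k, Yl i k * Z k j := by
      have h2 := congrFun (congrFun hYlZ i) j
      rw [Matrix.mul_apply] at h2
      have h3 : (1 : R) ⊗ₜ[F] (Y i j) = Yr i j := by simp [hYrdef, Matrix.map_apply, hrma]
      rw [h3, ← h2]
    rw [h1]
    refine Subalgebra.sum_mem A fun k _ => A.mul_mem ?_ ?_
    · have h3 : Yl i k = (Y i k) ⊗ₜ[F] (1 : R) := by simp [hYldef, Matrix.map_apply, hlma]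
      rw [h3]; exact hA1 _
    · obtain ⟨z, hz⟩ := (hErange _).mp (hZψ k j)
      rw [← hz]; exact hA2 z
  have hAdet : ∀ x : R, x * Y.det = 1 → (1 : R) ⊗ₜ[F] x ∈ A := by
    intro x hx
    have hZdet : Z.det = x ⊗ₜ[F] Y.det := by
      calc Z.det = ((x ⊗ₜ[F] (1 : R)) * (Y.det ⊗ₜ[F] (1 : R))) * Z.det := by
            rw [Algebra.TensorProduct.tmul_mul_tmul, hx, mul_one,
              ← Algebra.TensorProduct.one_def, one_mul]
        _ = (x ⊗ₜ[F] (1 : R)) * (Yl.det * Z.det) := by rw [hdetYl, mul_assoc]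
        _ = (x ⊗ₜ[F] (1 : R)) * Yr.det := by rw [hdetmul]
        _ = x ⊗ₜ[F] Y.det := by
            rw [hdetYr, Algebra.TensorProduct.tmul_mul_tmul, mul_one, one_mul]
    have hu : (Y.det ⊗ₜ[F] x) * Z.det = 1 := by
      rw [hZdet, Algebra.TensorProduct.tmul_mul_tmul, mul_comm Y.det x, hx,
        ← Algebra.TensorProduct.one_def]
    have hufix : ψ (Y.det ⊗ₜ[F] x) = Y.det ⊗ₜ[F] x := by
      have h2 : ψ (Y.det ⊗ₜ[F] x) * Z.det = 1 := by
        rw [← hZdetfix, ← map_mul, hu, map_one]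
      calc ψ (Y.det ⊗ₜ[F] x) = ψ (Y.det ⊗ₜ[F] x) * ((Y.det ⊗ₜ[F] x) * Z.det) := by
            rw [hu, mul_one]
        _ = (ψ (Y.det ⊗ₜ[F] x) * Z.det) * (Y.det ⊗ₜ[F] x) := by ring
        _ = Y.det ⊗ₜ[F] x := by rw [h2, one_mul]
    obtain ⟨w, hw⟩ := (hErange _).mp hufix
    have hfinal : (1 : R) ⊗ₜ[F] x = (x ⊗ₜ[F] (1 : R)) * ιE w := by
      rw [hw, Algebra.TensorProduct.tmul_mul_tmul, hx, one_mul]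
    rw [hfinal]
    exact A.mul_mem (hA1 x) (hA2 w)
  let T : Subalgebra F R :=
    { carrier := {b : R | (1 : R) ⊗ₜ[F] b ∈ A}
      mul_mem' := fun {a b} ha hb => by
        have h2 := A.mul_mem ha hb
        rwa [Algebra.TensorProduct.tmul_mul_tmul, one_mul] at h2
      one_mem' := by
        show (1 : R) ⊗ₜ[F] (1 : R) ∈ A
        rw [← Algebra.TensorProduct.one_def]; exact A.one_mem
      add_mem' := fun {a b} ha hb => by
        show (1 : R) ⊗ₜ[F] (a + b) ∈ A
        rw [TensorProduct.tmul_add]; exact A.add_mem ha hb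
      zero_mem' := by
        show (1 : R) ⊗ₜ[F] (0 : R) ∈ A
        rw [TensorProduct.tmul_zero]; exact A.zero_mem
      algebraMap_mem' := fun f => by
        show (1 : R) ⊗ₜ[F] (algebraMap F R f) ∈ A
        have h1 : (1 : R) ⊗ₜ[F] (algebraMap F R f) = (algebraMap F R f) ⊗ₜ[F] (1 : R) := by
          rw [Algebra.algebraMap_eq_smul_one (A := R), TensorProduct.tmul_smul,
            TensorProduct.smul_tmul']
        rw [h1]; exact hA1 _ }
  have hTtop : ∀ b : R, (1 : R) ⊗ₜ[F] b ∈ A := by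
    have hle : Algebra.adjoin F
        ((Set.range fun ij : Fin n × Fin n => Y ij.1 ij.2) ∪ {x | x * Y.det = 1}) ≤ T := by
      rw [Algebra.adjoin_le_iff]
      rintro b (hb | hb)
      · obtain ⟨ij, rfl⟩ := hb
        exact hAY ij.1 ij.2
      · exact hAdet b hb
    rw [hPV.gen] at hle
    intro b
    exact hle Algebra.mem_top
  have hsurj : Function.Surjective ⇑μ := by
    intro x
    have hx : x ∈ A := by
      induction x using TensorProduct.induction_on with
      | zero => exact A.zero_mem
      | tmul a b =>
        have h1 : a ⊗ₜ[F] b = (a ⊗ₜ[F] (1 : R)) * ((1 : R) ⊗ₜ[F] b) := by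
          rw [Algebra.TensorProduct.tmul_mul_tmul, mul_one, one_mul]
        rw [h1]; exact A.mul_mem (hA1 a) (hTtop b)
      | add u v hu hv => exact A.add_mem hu hv
    exact hx
  -- injectivity of μ
  have hinj : Function.Injective ⇑μ := by
    rw [injective_iff_map_eq_zero]
    intro x hx
    set B := β.baseChange R with hB
    have hrepr := B.linearCombination_repr x
    have hx2 : ∑ i ∈ (B.repr x).support, (((B.repr x) i) ⊗ₜ[F] (1 : R)) * ιE (β i) = 0 := by
      rw [← hx]
      conv_rhs => rw [← hrepr]
      rw [Finsupp.linearCombination_apply, Finsupp.sum, map_sum]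
      refine Finset.sum_congr rfl fun i hi => ?_
      have h1 : (B.repr x i) • (B i) = (B.repr x i) ⊗ₜ[C] ((β i : E)) := by
        rw [hB, Module.Basis.baseChange_apply, TensorProduct.smul_tmul', smul_eq_mul, mul_one]
      rw [h1, hμtmul]
    have hco : ∀ i ∈ (B.repr x).support, B.repr x i = 0 :=
      key (B.repr x).support.card _ le_rfl _ hx2
    have hre : B.repr x = 0 := by
      ext i
      by_cases hi : i ∈ (B.repr x).support
      · exact hco i hi
      · exact Finsupp.notMem_support_iff.mp hi
    rw [← hrepr, hre, map_zero]
  -- assembly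
  have hbij : Function.Bijective ⇑μ := ⟨hinj, hsurj⟩
  let e0 : (R ⊗[C] E) ≃+* (R ⊗[F] R) := RingEquiv.ofBijective μ hbij
  let φRA : R →ₐ[C] R := { toRingHom := φR, commutes' := hφC }
  let ψ'a := Algebra.TensorProduct.map φRA (AlgHom.id C E)
  have he0 : ∀ y, e0 y = μ y := fun y => rfl
  have hcomm : ∀ y : R ⊗[C] E, ψ (μ y) = μ (ψ'a y) := by
    intro y
    induction y using TensorProduct.induction_on with
    | zero => rw [map_zero, map_zero, map_zero, map_zero]
    | tmul a b =>
      rw [hμtmul, map_mul, Algebra.TensorProduct.map_tmul]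
      have h1 : ψ (a ⊗ₜ[F] (1 : R)) = φR a ⊗ₜ[F] (1 : R) := by rw [hψ, map_one]
      rw [h1, hψfix]
      rw [show (φRA a : R) = φR a from rfl, show (AlgHom.id C E) b = b from rfl, hμtmul]
    | add u v hu hv => rw [map_add, map_add, map_add, map_add, hu, hv]
  refine ⟨e0.symm, ψ'a.toRingHom, ?_, ?_, ?_⟩
  · intro a x
    show ψ'a (a ⊗ₜ[C] x) = _
    rw [Algebra.TensorProduct.map_tmul]
    rfl
  · intro r x
    apply e0.injective
    rw [RingEquiv.apply_symm_apply, map_mul, RingEquiv.apply_symm_apply]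
    have h1 : e0 (r ⊗ₜ[C] (1 : E)) = r ⊗ₜ[F] (1 : R) := by
      rw [he0, hμtmul, map_one, mul_one]
    rw [h1]
  · intro x
    apply e0.injective
    rw [RingEquiv.apply_symm_apply]
    have hx : x = μ (e0.symm x) := by rw [← he0, RingEquiv.apply_symm_apply]
    conv_lhs => rw [hx]
    rw [hcomm]
    exact (he0 _).symm
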